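/- Two-component sum decomposition of conditional satisfiability: a tie (φ, Φ, Γ) is satisfiable in the class F +ᵃ G iff there exist Φ₀, Φ₁ ⊆ Sub(φ) with Φ = Φ₀ ∪ Φ₁, such that (φ, Φ₀, Γ ∪ᵃ Φ₁) is satisfiable in F and (φ, Φ₁, Γ) is satisfiable in G. -/

import Mathlib

universe u

/-- Modal formulas over a set `A` of modality indices. -/
inductive MF (A : Type*) : Type _ where
  | bot : MF A
  | var : ℕ → MF A
  | imp : MF A → MF A → MF A
  | dia : A → MF A → MF A

/-- Truth at `w` under the condition `Γ` in the model `(R, θ)`. -/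
def csat {A W : Type*} (R : A → W → W → Prop) (θ : ℕ → W → Prop)
    (Γ : A → Set (MF A)) : MF A → W → Prop
  | .bot, _ => False
  | .var n, w => θ n w
  | .imp φ ψ, w => csat R θ Γ φ w → csat R θ Γ ψ w
  | .dia a φ, w => φ ∈ Γ a ∨ ∃ v, R a w v ∧ csat R θ Γ φ v

/-- The set of subformulas of a modal formula. -/
def subf {A : Type*} : MF A → Set (MF A)
  | .bot => {.bot}
  | .var n => {.var n}
  | .imp φ ψ => insert (.imp φ ψ) (subf φ ∪ subf ψ)
  | .dia a φ => insert (.dia a φ) (subf φ)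

/-- The subformulas of `φ` satisfiable in the model `(R, θ)` under condition `Γ`. -/
def satSet {A W : Type*} (R : A → W → W → Prop) (θ : ℕ → W → Prop)
    (Γ : A → Set (MF A)) (φ : MF A) : Set (MF A) :=
  {ψ ∈ subf φ | ∃ v, csat R θ Γ ψ v}

/-- An A-frame: a carrier with an A-indexed family of binary relations. -/
structure Frame (A : Type) : Type (u + 1) where
  W : Type u
  R : A → W → W → Prop

/-- The tie `(φ, Φ, Γ)` is satisfiable in a class `𝒢` of frames. -/
def TieSat {A : Type} (𝒢 : Set (Frame.{u} A)) (φ : MF A) (Φ : Set (MF A))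
    (Γ : A → Set (MF A)) : Prop :=
  ∃ F ∈ 𝒢, ∃ θ : ℕ → F.W → Prop, Φ = satSet F.R θ Γ φ

/-- The frame `F +ᵃ G`: the disjoint union of `F` and `G`, with additionally every point
of `F` related by `R_a` to every point of `G`. -/
def plusFrame {A : Type} (F G : Frame.{u} A) (a : A) : Frame.{u} A where
  W := F.W ⊕ G.W
  R := fun b x y =>
    match x, y with
    | .inl w, .inl v => F.R b w v
    | .inr w, .inr v => G.R b w v
    | .inl _, .inr _ => b = a
    | .inr _, .inl _ => False

/-- `Γ ∪ᵃ Ψ`: the condition `Γ` augmented at coordinate `a` by the set `Ψ`. -/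
def condUnion {A : Type} (Γ : A → Set (MF A)) (a : A) (Ψ : Set (MF A)) :
    A → Set (MF A) :=
  fun b => Γ b ∪ {ψ | b = a ∧ ψ ∈ Ψ}

lemma subf_self {A : Type*} (φ : MF A) : φ ∈ subf φ := by
  cases φ <;> simp [subf]

lemma subf_trans {A : Type*} {φ ψ : MF A} (h : ψ ∈ subf φ) : subf ψ ⊆ subf φ := by
  induction φ with
  | bot => simp [subf] at h; subst h; simp [subf]
  | var n => simp [subf] at h; subst h; simp [subf]
  | imp α β ihα ihβ =>
    simp only [subf, Set.mem_insert_iff, Set.mem_union] at h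
    rcases h with h | h | h
    · subst h; exact subset_rfl
    · exact (ihα h).trans (fun x hx => by simp [subf, hx])
    · exact (ihβ h).trans (fun x hx => by simp [subf, hx])
  | dia b α ih =>
    simp only [subf, Set.mem_insert_iff] at h
    rcases h with h | h
    · subst h; exact subset_rfl
    · exact (ih h).trans (fun x hx => by simp [subf, hx])

lemma csat_inr {A : Type} {F G : Frame.{u} A} {a : A} (θ : ℕ → (F.W ⊕ G.W) → Prop)
    (Γ : A → Set (MF A)) (ψ : MF A) (w : G.W) :
    csat (plusFrame F G a).R θ Γ ψ (Sum.inr w) ↔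
      csat G.R (fun n v => θ n (Sum.inr v)) Γ ψ w := by
  induction ψ generalizing w with
  | bot => exact Iff.rfl
  | var n => exact Iff.rfl
  | imp α β ihα ihβ => exact imp_congr (ihα w) (ihβ w)
  | dia b α ih =>
    simp only [csat]
    refine or_congr Iff.rfl ⟨?_, ?_⟩
    · rintro ⟨v, hR, hc⟩
      cases v with
      | inl v => exact absurd hR (by simp [plusFrame])
      | inr v => exact ⟨v, hR, (ih v).1 hc⟩
    · rintro ⟨v, hR, hc⟩
      exact ⟨Sum.inr v, hR, (ih v).2 hc⟩

lemma csat_inl {A : Type} {F G : Frame.{u} A} {a : A} (θ : ℕ → (F.W ⊕ G.W) → Prop)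
    (Γ : A → Set (MF A)) (φ : MF A) {ψ : MF A} (hψ : ψ ∈ subf φ) (w : F.W) :
    csat (plusFrame F G a).R θ Γ ψ (Sum.inl w) ↔
      csat F.R (fun n v => θ n (Sum.inl v))
        (condUnion Γ a (satSet G.R (fun n v => θ n (Sum.inr v)) Γ φ)) ψ w := by
  induction ψ generalizing w with
  | bot => exact Iff.rfl
  | var n => exact Iff.rfl
  | imp α β ihα ihβ =>
    have hα : α ∈ subf φ := subf_trans hψ (by simp [subf, subf_self])
    have hβ : β ∈ subf φ := subf_trans hψ (by simp [subf, subf_self])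
    exact imp_congr (ihα hα w) (ihβ hβ w)
  | dia b α ih =>
    have hα : α ∈ subf φ := subf_trans hψ (by simp [subf, subf_self])
    simp only [csat, condUnion, Set.mem_union, Set.mem_setOf_eq]
    constructor
    · rintro (h | ⟨v, hR, hc⟩)
      · exact Or.inl (Or.inl h)
      · cases v with
        | inl v => exact Or.inr ⟨v, hR, (ih hα v).1 hc⟩
        | inr v =>
          exact Or.inl (Or.inr ⟨hR, hα, v, (csat_inr θ Γ α v).1 hc⟩)
    · rintro ((h | ⟨hb, _, v, hc⟩) | ⟨v, hR, hc⟩)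
      · exact Or.inl h
      · exact Or.inr ⟨Sum.inr v, hb, (csat_inr θ Γ α v).2 hc⟩
      · exact Or.inr ⟨Sum.inl v, hR, (ih hα v).2 hc⟩

lemma satSet_plus {A : Type} {F G : Frame.{u} A} {a : A} (θ : ℕ → (F.W ⊕ G.W) → Prop)
    (Γ : A → Set (MF A)) (φ : MF A) :
    satSet (plusFrame F G a).R θ Γ φ =
      satSet F.R (fun n v => θ n (Sum.inl v))
        (condUnion Γ a (satSet G.R (fun n v => θ n (Sum.inr v)) Γ φ)) φ ∪
      satSet G.R (fun n v => θ n (Sum.inr v)) Γ φ := by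
  ext ψ
  simp only [satSet, Set.mem_setOf_eq, Set.mem_union]
  constructor
  · rintro ⟨hs, v, hc⟩
    cases v with
    | inl v => exact Or.inl ⟨hs, v, (csat_inl θ Γ φ hs v).1 hc⟩
    | inr v => exact Or.inr ⟨hs, v, (csat_inr θ Γ ψ v).1 hc⟩
  · rintro (⟨hs, v, hc⟩ | ⟨hs, v, hc⟩)
    · exact ⟨hs, Sum.inl v, (csat_inl θ Γ φ hs v).2 hc⟩
    · exact ⟨hs, Sum.inr v, (csat_inr θ Γ ψ v).2 hc⟩

/-- Two-component sum decomposition of conditional satisfiability. -/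
theorem stmt_13 {A : Type} (ℱ 𝒢 : Set (Frame.{u} A)) (a : A)
    (φ : MF A) (Φ : Set (MF A)) (hΦ : Φ ⊆ subf φ) (Γ : A → Set (MF A)) :
    TieSat {H | ∃ F ∈ ℱ, ∃ G ∈ 𝒢, H = plusFrame F G a} φ Φ Γ ↔
      ∃ Φ₀ Φ₁ : Set (MF A), Φ₀ ⊆ subf φ ∧ Φ₁ ⊆ subf φ ∧ Φ = Φ₀ ∪ Φ₁ ∧
        TieSat ℱ φ Φ₀ (condUnion Γ a Φ₁) ∧ TieSat 𝒢 φ Φ₁ Γ := by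
  constructor
  · rintro ⟨H, ⟨F, hF, G, hG, rfl⟩, θ, hΦeq⟩
    refine ⟨satSet F.R (fun n v => θ n (Sum.inl v))
        (condUnion Γ a (satSet G.R (fun n v => θ n (Sum.inr v)) Γ φ)) φ,
      satSet G.R (fun n v => θ n (Sum.inr v)) Γ φ,
      fun ψ h => h.1, fun ψ h => h.1, ?_,
      ⟨F, hF, fun n v => θ n (Sum.inl v), rfl⟩,
      ⟨G, hG, fun n v => θ n (Sum.inr v), rfl⟩⟩
    rw [hΦeq]; exact satSet_plus θ Γ φ
  · rintro ⟨Φ₀, Φ₁, h₀, h₁, rfl, ⟨F, hF, θF, hΦ₀⟩, ⟨G, hG, θG, hΦ₁⟩⟩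
    refine ⟨plusFrame F G a, ⟨F, hF, G, hG, rfl⟩,
      fun n => Sum.elim (θF n) (θG n), ?_⟩
    rw [satSet_plus, hΦ₀, hΦ₁]; rfl
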